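/- Let φ: Λ → Γ be an injective group homomorphism between finitely generated residually finite groups such that the induced map of profinite completions is an isomorphism. If there exists a homomorphism τ: Γ → Λ with τ ∘ φ = id_Λ (i.e., Λ is a retract of Γ via φ), then φ is an isomorphism. -/

import Mathlib

/-- The index type of finite quotients: finite-index normal subgroups. -/
def FinQuot (G : Type*) [Group G] : Type _ :=
  {N : Subgroup G // N.Normal ∧ N.FiniteIndex}

instance {G : Type*} [Group G] (N : FinQuot G) : N.1.Normal := N.2.1
instance {G : Type*} [Group G] (N : FinQuot G) : N.1.FiniteIndex := N.2.2

instance {G : Type*} [Group G] (N : FinQuot G) : TopologicalSpace (G ⧸ N.1) := ⊥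

/-- The subgroup of compatible families in the product of all finite quotients. -/
def profCompat (G : Type*) [Group G] : Subgroup (Π N : FinQuot G, G ⧸ N.1) where
  carrier := {x | ∀ (N M : FinQuot G) (h : N.1 ≤ M.1),
    QuotientGroup.map N.1 M.1 (MonoidHom.id G) (by simpa using h) (x N) = x M}
  one_mem' := by intro N M h; simp
  mul_mem' := by
    intro a b ha hb N M h
    simp only [Pi.mul_apply, map_mul, ha N M h, hb N M h]
  inv_mem' := by
    intro a ha N M h
    simp only [Pi.inv_apply, map_inv, ha N M h]

/-- The profinite completion of a group, as the inverse limit of its finite quotients. -/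
def ProfComp (G : Type*) [Group G] : Type _ := profCompat G

instance {G : Type*} [Group G] : Group (ProfComp G) :=
  inferInstanceAs (Group (profCompat G))

instance {G : Type*} [Group G] : TopologicalSpace (ProfComp G) :=
  inferInstanceAs (TopologicalSpace {x : Π N : FinQuot G, G ⧸ N.1 // x ∈ profCompat G})

/-- The canonical map from a group to its profinite completion. -/
def toProf (G : Type*) [Group G] : G →* ProfComp G where
  toFun g := ⟨fun N => QuotientGroup.mk g, by
    intro N M h
    simp [QuotientGroup.map_mk]⟩
  map_one' := by apply Subtype.ext; funext N; rfl
  map_mul' a b := by apply Subtype.ext; funext N; rfl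

/-- The pullback of a finite-index normal subgroup along a homomorphism. -/
def pullFQ {Λ Γ : Type*} [Group Λ] [Group Γ] (φ : Λ →* Γ) (N : FinQuot Γ) : FinQuot Λ :=
  ⟨N.1.comap φ, N.2.1.comap φ, ⟨by
    refine ne_zero_of_dvd_ne_zero N.2.2.index_ne_zero ?_
    rw [Subgroup.index_comap]
    exact Subgroup.relIndex_dvd_index_of_normal N.1 φ.range⟩⟩

/-- The induced homomorphism between profinite completions. -/
def profMap {Λ Γ : Type*} [Group Λ] [Group Γ] (φ : Λ →* Γ) :
    ProfComp Λ →* ProfComp Γ where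
  toFun x := ⟨fun N => QuotientGroup.map (pullFQ φ N).1 N.1 φ le_rfl (x.1 (pullFQ φ N)), by
    intro N M h
    obtain ⟨g, hg⟩ := QuotientGroup.mk_surjective (x.1 (pullFQ φ N))
    have hx := x.2 (pullFQ φ N) (pullFQ φ M) (Subgroup.comap_mono h)
    show QuotientGroup.map _ _ _ _
        (QuotientGroup.map _ _ φ _ (x.1 (pullFQ φ N))) =
      QuotientGroup.map _ _ φ _ (x.1 (pullFQ φ M))
    rw [← hx, ← hg]
    rfl⟩
  map_one' := by
    apply Subtype.ext
    funext N
    show QuotientGroup.map _ _ φ _ ((1 : ProfComp Λ).1 (pullFQ φ N)) = _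
    rw [show ((1 : ProfComp Λ).1 (pullFQ φ N)) = 1 from rfl, map_one]
    rfl
  map_mul' a b := by
    apply Subtype.ext
    funext N
    show QuotientGroup.map _ _ _ _ ((a * b).1 (pullFQ φ N)) = _
    have : (a * b).1 (pullFQ φ N) = a.1 (pullFQ φ N) * b.1 (pullFQ φ N) := rfl
    rw [this, map_mul]
    rfl

/-- A group is residually finite if every nontrivial element survives in some finite
quotient. -/
def ResiduallyFinite (G : Type*) [Group G] : Prop :=
  ∀ g : G, g ≠ 1 → ∃ N : Subgroup G, N.Normal ∧ N.FiniteIndex ∧ g ∉ N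


/-- Density of the image of `φ` in every finite quotient, from surjectivity of `profMap φ`. -/
lemma dense_of_profMap_surjective {Λ Γ : Type*} [Group Λ] [Group Γ] (φ : Λ →* Γ)
    (hsurj : Function.Surjective (profMap φ)) (N : FinQuot Γ) (γ : Γ) :
    ∃ l : Λ, (QuotientGroup.mk (φ l) : Γ ⧸ N.1) = QuotientGroup.mk γ := by
  obtain ⟨y, hy⟩ := hsurj (toProf Γ γ)
  have hcomp : (profMap φ y).1 N = (toProf Γ γ).1 N := by rw [hy]
  obtain ⟨l, hl⟩ := QuotientGroup.mk_surjective (y.1 (pullFQ φ N))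
  refine ⟨l, ?_⟩
  have : QuotientGroup.map (pullFQ φ N).1 N.1 φ le_rfl (y.1 (pullFQ φ N))
      = (QuotientGroup.mk γ : Γ ⧸ N.1) := hcomp
  rw [← hl] at this
  exact (QuotientGroup.map_mk _ _ _ _ l).symm.trans this

/-- If `φ : Λ → Γ` is a Grothendieck pair (an injection of finitely generated
residually finite groups inducing an isomorphism of profinite completions) and `Λ` is a
retract of `Γ` via `φ`, then `φ` is an isomorphism. -/
theorem grothendieckPair_retract_isIso {Λ Γ : Type*} [Group Λ] [Group Γ]
    (hΛfg : Group.FG Λ) (hΓfg : Group.FG Γ)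
    (hΛrf : ResiduallyFinite Λ) (hΓrf : ResiduallyFinite Γ)
    (φ : Λ →* Γ) (hφinj : Function.Injective φ)
    (hGP : Function.Bijective (profMap φ))
    (τ : Γ →* Λ) (hretr : τ.comp φ = MonoidHom.id Λ) :
    Function.Bijective φ := by
  refine ⟨hφinj, ?_⟩
  intro γ
  have hτφ : ∀ x : Λ, τ (φ x) = x := fun x => DFunLike.congr_fun hretr x
  set k := γ * (φ (τ γ))⁻¹ with hk
  have hτk : τ k = 1 := by
    simp [hk, hτφ]
  -- claim k = 1
  by_cases hk1 : k = 1
  · exact ⟨τ γ, (mul_inv_eq_one.mp hk1).symm⟩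
  · exfalso
    obtain ⟨N, hNnorm, hNfi, hkN⟩ := hΓrf k hk1
    haveI := hNnorm; haveI := hNfi
    set NQ : FinQuot Γ := ⟨N, hNnorm, hNfi⟩ with hNQ
    have hMnorm : (NQ.1 ⊓ (pullFQ (φ.comp τ) NQ).1).Normal :=
      ⟨fun n hn g => ⟨NQ.2.1.conj_mem n hn.1 g, (pullFQ (φ.comp τ) NQ).2.1.conj_mem n hn.2 g⟩⟩
    haveI : (pullFQ (φ.comp τ) NQ).1.FiniteIndex := (pullFQ (φ.comp τ) NQ).2.2
    have hMfi : (NQ.1 ⊓ (pullFQ (φ.comp τ) NQ).1).FiniteIndex := inferInstance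
    set M : FinQuot Γ := ⟨NQ.1 ⊓ (pullFQ (φ.comp τ) NQ).1, hMnorm, hMfi⟩ with hM
    obtain ⟨l, hl⟩ := dense_of_profMap_surjective φ hGP.2 M k
    have hmem : (φ l)⁻¹ * k ∈ M.1 := QuotientGroup.eq.mp hl
    set m := (φ l)⁻¹ * k with hm
    have hmN : m ∈ N := hmem.1
    have hmcomap : m ∈ NQ.1.comap (φ.comp τ) := hmem.2
    have hkeq : k = φ l * m := by rw [hm]; group
    have hlval : l = (τ m)⁻¹ := by
      have : (1 : Λ) = l * τ m := by
        rw [← hτk, hkeq, map_mul, hτφ]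
      exact eq_inv_of_mul_eq_one_left this.symm
    have hφl : φ l ∈ N := by
      rw [hlval, map_inv]
      exact N.inv_mem hmcomap
    exact hkN (by rw [hkeq]; exact N.mul_mem hφl hmN)
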